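/- Let v be a transferable-utility coalitional game on I = {1,…,N} with nonempty core C(v) ≠ ∅. For each i ∈ I, let T_i : ℝ^N → ℝ^N be a paracontraction with respect to the Euclidean norm whose fixed-point set is the bounding set X_i(v), and define T : (ℝ^N)^N → (ℝ^N)^N blockwise by T(x_1,…,x_N) = (T_1(x_1),…,T_N(x_N)). Let W ∈ ℝ^{N×N} be a symmetric doubly stochastic matrix with strictly positive diagonal entries that is irreducible (for all i,j there exists m ≥ 1 with (W^m)_{ij} > 0). Then fix(T ∘ (W ⊗ I_N)) = A ∩ (⋂_{i∈I} X_i(v))^N = {(c,…,c) : c ∈ C(v)}, the set of consensus vectors whose common block is a core allocation. -/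

import Mathlib

/-- A map `T : ℝ^n → ℝ^n` is a paracontraction w.r.t. the Euclidean norm if
`‖T x − y‖ < ‖x − y‖` for every fixed point `y` of `T` and every non-fixed point `x`. -/
def IsParacontraction {n : ℕ} (T : EuclideanSpace ℝ (Fin n) → EuclideanSpace ℝ (Fin n)) : Prop :=
  ∀ y, T y = y → ∀ x, T x ≠ x → ‖T x - y‖ < ‖x - y‖

/-- The bounding set of player `i`:
`X_i(v) = {x : Σ_j x_j = v(I), Σ_{j∈S} x_j ≥ v(S) for every S ⊆ I with i ∈ S}`. -/
def boundingSet {N : ℕ} (v : Finset (Fin N) → ℝ) (i : Fin N) :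
    Set (EuclideanSpace ℝ (Fin N)) :=
  {x | ∑ j, x j = v Finset.univ ∧
    ∀ S : Finset (Fin N), i ∈ S → v S ≤ ∑ j ∈ S, x j}

/-- The core of a TU coalitional game `v` on `I = {1,…,N}`:
`C(v) = {x : Σ_i x_i = v(I), Σ_{i∈S} x_i ≥ v(S) for every nonempty S ⊆ I}`. -/
def core {N : ℕ} (v : Finset (Fin N) → ℝ) : Set (EuclideanSpace ℝ (Fin N)) :=
  {x | ∑ i, x i = v Finset.univ ∧
    ∀ S : Finset (Fin N), S.Nonempty → v S ≤ ∑ i ∈ S, x i}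

lemma pow_entry_nonneg {N : ℕ} (W : Matrix (Fin N) (Fin N) ℝ)
    (hnonneg : ∀ i j, 0 ≤ W i j) : ∀ m, 1 ≤ m → ∀ i j, 0 ≤ (W ^ m) i j := by
  intro m hm
  induction m with
  | zero => omega
  | succ n ih =>
    intro i j
    rcases Nat.eq_zero_or_pos n with h | h
    · subst h; simpa using hnonneg i j
    · rw [pow_succ, Matrix.mul_apply]
      exact Finset.sum_nonneg fun l _ => mul_nonneg (ih h i l) (hnonneg l j)

lemma pow_rowsum {N : ℕ} (W : Matrix (Fin N) (Fin N) ℝ)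
    (hrow : ∀ i, ∑ j, W i j = 1) : ∀ m, 1 ≤ m → ∀ i, ∑ j, (W ^ m) i j = 1 := by
  intro m hm
  induction m with
  | zero => omega
  | succ n ih =>
    intro i
    rcases Nat.eq_zero_or_pos n with h | h
    · subst h; simpa using hrow i
    · simp only [pow_succ, Matrix.mul_apply]
      rw [Finset.sum_comm]
      calc ∑ l, ∑ j, (W ^ n) i l * W l j = ∑ l, (W ^ n) i l * ∑ j, W l j := by
            simp [Finset.mul_sum]
        _ = 1 := by simp [hrow, ih h]

lemma pow_fixed {N : ℕ} (W : Matrix (Fin N) (Fin N) ℝ) (u : Fin N → ℝ)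
    (hu : ∀ i, ∑ j, W i j * u j = u i) :
    ∀ m, 1 ≤ m → ∀ i, ∑ j, (W ^ m) i j * u j = u i := by
  intro m hm
  induction m with
  | zero => omega
  | succ n ih =>
    intro i
    rcases Nat.eq_zero_or_pos n with h | h
    · subst h; simpa using hu i
    · simp only [pow_succ', Matrix.mul_apply, Finset.sum_mul]
      rw [Finset.sum_comm]
      calc ∑ l, ∑ j, W i l * (W ^ n) l j * u j
          = ∑ l, W i l * ∑ j, (W ^ n) l j * u j := by
            simp [Finset.mul_sum, mul_assoc]
        _ = u i := by simp only [ih h]; exact hu i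

lemma weighted_max {N : ℕ} (a u : Fin N → ℝ) (M : ℝ)
    (ha : ∀ l, 0 ≤ a l) (hsum : ∑ l, a l = 1) (hle : ∀ l, u l ≤ M)
    (heq : ∑ l, a l * u l = M) {j : Fin N} (hj : 0 < a j) : u j = M := by
  have key : ∑ l, a l * (M - u l) = 0 := by
    simp only [mul_sub]
    rw [Finset.sum_sub_distrib, heq, ← Finset.sum_mul, hsum, one_mul, sub_self]
  have hterm : a j * (M - u j) = 0 :=
    (Finset.sum_eq_zero_iff_of_nonneg (fun l _ =>
      mul_nonneg (ha l) (sub_nonneg.mpr (hle l)))).mp key j (Finset.mem_univ j)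
  have : M - u j = 0 := by
    rcases mul_eq_zero.mp hterm with h | h
    · exact absurd h (ne_of_gt hj)
    · exact h
  linarith


/-- for blockwise paracontractions `T_i` with `fix(T_i) = X_i(v)` and an
irreducible symmetric doubly stochastic `W` with positive diagonal,
`fix(T ∘ (W ⊗ I_N)) = A ∩ (⋂_i X_i(v))^N = {(c,…,c) : c ∈ C(v)}`. -/
theorem stmt_16 (N : ℕ) (hN : 0 < N)
    (v : Finset (Fin N) → ℝ) (hv : v ∅ = 0)
    (hcore : (core v).Nonempty)
    (T : Fin N → EuclideanSpace ℝ (Fin N) → EuclideanSpace ℝ (Fin N))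
    (hpara : ∀ i, IsParacontraction (T i))
    (hfixT : ∀ i, {x | T i x = x} = boundingSet v i)
    (W : Matrix (Fin N) (Fin N) ℝ)
    (hsymm : W.IsSymm)
    (hnonneg : ∀ i j, 0 ≤ W i j)
    (hrow : ∀ i, ∑ j, W i j = 1)
    (hcol : ∀ j, ∑ i, W i j = 1)
    (hdiag : ∀ i, 0 < W i i)
    (hirr : ∀ i j, ∃ m, 1 ≤ m ∧ 0 < (W ^ m) i j) :
    {x : Fin N → EuclideanSpace ℝ (Fin N) | (fun i => T i (∑ j, W i j • x j)) = x} =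
      {x : Fin N → EuclideanSpace ℝ (Fin N) |
        (∀ i j, x i = x j) ∧ ∀ i, x i ∈ ⋂ j, boundingSet v j} ∧
    {x : Fin N → EuclideanSpace ℝ (Fin N) |
        (∀ i j, x i = x j) ∧ ∀ i, x i ∈ ⋂ j, boundingSet v j} =
      {x : Fin N → EuclideanSpace ℝ (Fin N) | ∃ c ∈ core v, x = fun _ => c} := by
  obtain ⟨c, hcsum, hcS⟩ := hcore
  have hcX : ∀ i, c ∈ boundingSet v i := fun i => ⟨hcsum, fun S hS => hcS S ⟨i, hS⟩⟩
  have hTc : ∀ i, T i c = c := fun i => by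
    have : c ∈ {x | T i x = x} := (hfixT i).symm ▸ hcX i
    exact this
  have hIcore : (⋂ j, boundingSet v j) = core v := by
    ext z
    simp only [Set.mem_iInter]
    constructor
    · intro h
      refine ⟨(h ⟨0, hN⟩).1, fun S hS => ?_⟩
      obtain ⟨i, hi⟩ := hS
      exact (h i).2 S hi
    · intro h i
      exact ⟨h.1, fun S hiS => h.2 S ⟨i, hiS⟩⟩
  constructor
  · ext x
    simp only [Set.mem_setOf_eq]
    constructor
    · intro hx
      have hx' : ∀ i, T i (∑ j, W i j • x j) = x i := fun i => congrFun hx i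
      set y : Fin N → EuclideanSpace ℝ (Fin N) := fun i => ∑ j, W i j • x j with hy
      have hA : ∀ i, ‖x i - c‖ ≤ ‖y i - c‖ := fun i => by
        by_cases h : T i (y i) = y i
        · rw [← hx' i, h]
        · have := hpara i c (hTc i) (y i) h
          rw [hx' i] at this
          linarith
      have hyc : ∀ i, y i - c = ∑ j, W i j • (x j - c) := fun i => by
        simp only [smul_sub, hy]
        rw [Finset.sum_sub_distrib, ← Finset.sum_smul, hrow i, one_smul]
      have hB : ∀ i, ‖y i - c‖ ≤ ∑ j, W i j * ‖x j - c‖ := fun i => by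
        rw [hyc i]
        calc ‖∑ j, W i j • (x j - c)‖ ≤ ∑ j, ‖W i j • (x j - c)‖ := norm_sum_le _ _
          _ = ∑ j, W i j * ‖x j - c‖ := by
            refine Finset.sum_congr rfl fun j _ => ?_
            rw [norm_smul, Real.norm_eq_abs, abs_of_nonneg (hnonneg i j)]
      have hsumle : ∑ i, ‖y i - c‖ ≤ ∑ i, ‖x i - c‖ := by
        calc ∑ i, ‖y i - c‖ ≤ ∑ i, ∑ j, W i j * ‖x j - c‖ :=
              Finset.sum_le_sum fun i _ => hB i
          _ = ∑ j, (∑ i, W i j) * ‖x j - c‖ := by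
              rw [Finset.sum_comm]; simp [Finset.sum_mul]
          _ = ∑ j, ‖x j - c‖ := by simp [hcol]
      have heqn : ∀ i, ‖x i - c‖ = ‖y i - c‖ := by
        by_contra h
        push_neg at h
        obtain ⟨i0, hi0⟩ := h
        have : ∑ i, ‖x i - c‖ < ∑ i, ‖y i - c‖ :=
          Finset.sum_lt_sum (fun i _ => hA i)
            ⟨i0, Finset.mem_univ i0, lt_of_le_of_ne (hA i0) hi0⟩
        linarith
      have hfixed : ∀ i, T i (y i) = y i := fun i => by
        by_contra h
        have := hpara i c (hTc i) (y i) h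
        rw [hx' i, heqn i] at this
        exact absurd this (lt_irrefl _)
      have hfix : ∀ i, x i = y i := fun i => by rw [← hx' i, hfixed i]
      have hWx : ∀ i k, ∑ j, W i j * x j k = x i k := fun i k => by
        have h2 : y i k = x i k := by rw [← hfix i]
        rw [← h2, hy]
        show ∑ j, W i j * x j k = (∑ j, W i j • x j) k
        rw [WithLp.ofLp_sum, Finset.sum_apply]
        simp [PiLp.smul_apply]
      have hcons : ∀ i j, x i = x j := by
        have key : ∀ k i j, x i k = x j k := by
          intro k
          set u : Fin N → ℝ := fun l => x l k with hu
          have hufix : ∀ i, ∑ j, W i j * u j = u i := fun i => hWx i k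
          obtain ⟨i0, -, hi0⟩ := Finset.exists_max_image Finset.univ u
            ⟨⟨0, hN⟩, Finset.mem_univ _⟩
          have hall : ∀ j, u j = u i0 := by
            intro j
            obtain ⟨m, hm1, hmpos⟩ := hirr i0 j
            exact weighted_max (fun l => (W ^ m) i0 l) u (u i0)
              (fun l => pow_entry_nonneg W hnonneg m hm1 i0 l)
              (pow_rowsum W hrow m hm1 i0)
              (fun l => hi0 l (Finset.mem_univ l))
              (pow_fixed W u hufix m hm1 i0) hmpos
          intro i j
          rw [show x i k = u i from rfl, show x j k = u j from rfl, hall i, hall j]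
        intro i j
        ext k
        exact key k i j
      refine ⟨hcons, fun i => ?_⟩
      rw [Set.mem_iInter]
      intro j
      have hTj : T j (x j) = x j := by
        rw [hfix j]; exact hfixed j
      have hxj : x j ∈ boundingSet v j := by
        rw [← hfixT j]; exact hTj
      rw [hcons i j]
      exact hxj
    · rintro ⟨hcons, hmem⟩
      funext i
      have h1 : ∑ j, W i j • x j = x i := by
        have : ∀ j, x j = x i := fun j => hcons j i
        calc ∑ j, W i j • x j = ∑ j, W i j • x i := by
              refine Finset.sum_congr rfl fun j _ => by rw [this j]
          _ = (∑ j, W i j) • x i := by rw [Finset.sum_smul]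
          _ = x i := by rw [hrow i, one_smul]
      rw [h1]
      have hxi : x i ∈ boundingSet v i := Set.mem_iInter.mp (hmem i) i
      rw [← hfixT i] at hxi
      exact hxi
  · ext x
    simp only [Set.mem_setOf_eq]
    constructor
    · rintro ⟨hcons, hmem⟩
      refine ⟨x ⟨0, hN⟩, ?_, ?_⟩
      · rw [← hIcore]; exact hmem _
      · funext i; exact hcons i ⟨0, hN⟩
    · rintro ⟨c', hc', rfl⟩
      exact ⟨fun i j => rfl, fun i => hIcore.symm ▸ hc'⟩
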